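/- arXiv:1606.06787 — 2 statements merged into one kernel-verified Lean document; each statement's English description precedes it below -/
import Mathlib

section
/- For all nonnegative real numbers a, b and every real p > 1, one has (a - b)(a^p - b^p) ≥ (4p/(p+1)²) (a^{(p+1)/2} - b^{(p+1)/2})². -/
open Real Set

/-- Convexity/Bernoulli: for `0 < b ≤ a` and `1 ≤ q`, `a^q - b^q ≤ q * a^(q-1) * (a-b)`. -/
lemma bern_aux {a b q : ℝ} (hb : 0 < b) (hab : b ≤ a) (hq : 1 ≤ q) :
    a ^ q - b ^ q ≤ q * a ^ (q - 1) * (a - b) := by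
  have ha : 0 < a := hb.trans_le hab
  have hs : (-1 : ℝ) ≤ b / a - 1 := by
    have : 0 ≤ b / a := by positivity
    linarith
  have hbern := one_add_mul_self_le_rpow_one_add hs hq
  rw [add_sub_cancel] at hbern
  have hdiv : (b / a) ^ q = b ^ q / a ^ q := Real.div_rpow hb.le ha.le q
  rw [hdiv] at hbern
  have haq : (0:ℝ) < a ^ q := Real.rpow_pos_of_pos ha _
  have key : (1 + q * (b / a - 1)) * a ^ q ≤ b ^ q := by
    calc (1 + q * (b / a - 1)) * a ^ q ≤ (b ^ q / a ^ q) * a ^ q :=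
          mul_le_mul_of_nonneg_right hbern haq.le
      _ = b ^ q := by field_simp
  have hq1 : a ^ q = a ^ (q - 1) * a := by
    rw [← Real.rpow_add_one ha.ne']; ring_nf
  have hq2 : (b / a) * a ^ q = b * a ^ (q - 1) := by
    rw [hq1]; field_simp
  nlinarith [key, hq1, hq2]

lemma key_lemma {b p : ℝ} (hb : 0 < b) (hp : 1 < p) {a : ℝ} (hab : b ≤ a) :
    p * (a ^ ((p + 1) / 2) - b ^ ((p + 1) / 2)) ^ 2 ≤
      ((p + 1) / 2) ^ 2 * ((a - b) * (a ^ p - b ^ p)) := by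
  set q : ℝ := (p + 1) / 2 with hq_def
  have hq : 1 < q := by rw [hq_def]; linarith
  -- F x = q²(x-b)(x^p - b^p) - p(x^q - b^q)²
  set F : ℝ → ℝ := fun x => q ^ 2 * ((x - b) * (x ^ p - b ^ p)) - p * (x ^ q - b ^ q) ^ 2
    with hF_def
  -- G = F'
  set G : ℝ → ℝ := fun x =>
      q ^ 2 * ((x ^ p - b ^ p) + (x - b) * (p * x ^ (p - 1)))
        - p * (2 * (x ^ q - b ^ q) * (q * x ^ (q - 1))) with hG_def
  -- H = G'
  set H : ℝ → ℝ := fun x =>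
      q ^ 2 * (p * x ^ (p - 1) + (p * x ^ (p - 1) + (x - b) * (p * ((p - 1) * x ^ (p - 1 - 1)))))
        - p * (2 * ((q * x ^ (q - 1)) * (q * x ^ (q - 1)))
            + 2 * (x ^ q - b ^ q) * (q * ((q - 1) * x ^ (q - 1 - 1)))) with hH_def
  have hFderiv : ∀ x : ℝ, 0 < x → HasDerivAt F (G x) x := by
    intro x hx
    have hxp : HasDerivAt (fun y : ℝ => y ^ p) (p * x ^ (p - 1)) x :=
      Real.hasDerivAt_rpow_const (Or.inl hx.ne')
    have hxq : HasDerivAt (fun y : ℝ => y ^ q) (q * x ^ (q - 1)) x :=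
      Real.hasDerivAt_rpow_const (Or.inl hx.ne')
    have h1 : HasDerivAt (fun y : ℝ => (y - b) * (y ^ p - b ^ p))
        (1 * (x ^ p - b ^ p) + (x - b) * (p * x ^ (p - 1))) x :=
      ((hasDerivAt_id x).sub_const b).mul (hxp.sub_const _)
    have h2 : HasDerivAt (fun y : ℝ => (y ^ q - b ^ q) ^ 2)
        (2 * (x ^ q - b ^ q) ^ 1 * (q * x ^ (q - 1))) x := (hxq.sub_const _).pow 2
    have := (h1.const_mul (q ^ 2)).sub (h2.const_mul p)
    refine HasDerivAt.congr_deriv this ?_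
    simp only [hG_def, pow_one]; ring
  have hGderiv : ∀ x : ℝ, 0 < x → HasDerivAt G (H x) x := by
    intro x hx
    have hxp : HasDerivAt (fun y : ℝ => y ^ p) (p * x ^ (p - 1)) x :=
      Real.hasDerivAt_rpow_const (Or.inl hx.ne')
    have hxq : HasDerivAt (fun y : ℝ => y ^ q) (q * x ^ (q - 1)) x :=
      Real.hasDerivAt_rpow_const (Or.inl hx.ne')
    have hxp1 : HasDerivAt (fun y : ℝ => y ^ (p - 1)) ((p - 1) * x ^ (p - 1 - 1)) x :=
      Real.hasDerivAt_rpow_const (Or.inl hx.ne')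
    have hxq1 : HasDerivAt (fun y : ℝ => y ^ (q - 1)) ((q - 1) * x ^ (q - 1 - 1)) x :=
      Real.hasDerivAt_rpow_const (Or.inl hx.ne')
    have h1 : HasDerivAt (fun y : ℝ => (y ^ p - b ^ p) + (y - b) * (p * y ^ (p - 1)))
        ((p * x ^ (p - 1)) + (1 * (p * x ^ (p - 1)) + (x - b) * (p * ((p - 1) * x ^ (p - 1 - 1))))) x :=
      (hxp.sub_const _).add (((hasDerivAt_id x).sub_const b).mul (hxp1.const_mul p))
    have h2 : HasDerivAt (fun y : ℝ => 2 * (y ^ q - b ^ q) * (q * y ^ (q - 1)))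
        ((2 * (q * x ^ (q - 1))) * (q * x ^ (q - 1))
          + (2 * (x ^ q - b ^ q)) * (q * ((q - 1) * x ^ (q - 1 - 1)))) x :=
      (((hxq.sub_const _).const_mul 2)).mul (hxq1.const_mul q)
    have := (h1.const_mul (q ^ 2)).sub (h2.const_mul p)
    refine HasDerivAt.congr_deriv this ?_
    simp only [hH_def]; ring
  -- H ≥ 0 on Ici b
  have hHnn : ∀ x : ℝ, b ≤ x → 0 ≤ H x := by
    intro x hx
    have hx0 : 0 < x := hb.trans_le hx
    have e1 : x ^ (q - 1) * x ^ (q - 1) = x ^ (p - 1) := by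
      rw [← Real.rpow_add hx0]; congr 1; rw [hq_def]; ring
    have e2 : x ^ (p - 1 - 1) = x ^ (q - 1) * x ^ (q - 1 - 1) := by
      rw [← Real.rpow_add hx0]; congr 1; rw [hq_def]; ring
    have hbern := bern_aux hb hx hq.le
    have hxq2 : (0:ℝ) ≤ x ^ (q - 1 - 1) := (Real.rpow_pos_of_pos hx0 _).le
    -- q(x-b)x^{q-1} ≥ x^q - b^q, multiply by x^{q-1-1}
    have step : (x ^ q - b ^ q) * x ^ (q - 1 - 1) ≤ (q * x ^ (q - 1) * (x - b)) * x ^ (q - 1 - 1) :=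
      mul_le_mul_of_nonneg_right hbern hxq2
    have hHx : H x = p * (p - 1) * q *
        ((q * x ^ (q - 1) * (x - b)) * x ^ (q - 1 - 1) - (x ^ q - b ^ q) * x ^ (q - 1 - 1)) := by
      simp only [hH_def]
      linear_combination (-(2 * p * q ^ 2)) * e1 + (p * q ^ 2 * (p - 1) * (x - b)) * e2 +
        (2 * p * q * (x ^ q - b ^ q) * x ^ (q - 1 - 1)) * hq_def
    rw [hHx]
    have hfac : (0:ℝ) ≤ p * (p - 1) * q :=
      (mul_pos (mul_pos (by linarith : (0:ℝ) < p) (by linarith : (0:ℝ) < p - 1))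
        (by linarith : (0:ℝ) < q)).le
    exact mul_nonneg hfac (sub_nonneg.2 step)
  -- G is monotone on Ici b, G b = 0, hence G ≥ 0 there
  have hGcont : ContinuousOn G (Ici b) := fun x hx =>
    (hGderiv x (hb.trans_le hx)).continuousAt.continuousWithinAt
  have hGmono : MonotoneOn G (Ici b) := by
    apply monotoneOn_of_hasDerivWithinAt_nonneg (convex_Ici b) hGcont
    · intro x hx
      rw [interior_Ici] at hx
      exact (hGderiv x (hb.trans hx)).hasDerivWithinAt
    · intro x hx
      rw [interior_Ici] at hx
      exact hHnn x hx.le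
  have hGb : G b = 0 := by simp only [hG_def]; ring
  have hGnn : ∀ x : ℝ, b ≤ x → 0 ≤ G x := fun x hx => by
    rw [← hGb]; exact hGmono (self_mem_Ici) hx hx
  -- F is monotone on Ici b, F b = 0, hence F ≥ 0 there
  have hFcont : ContinuousOn F (Ici b) := fun x hx =>
    (hFderiv x (hb.trans_le hx)).continuousAt.continuousWithinAt
  have hFmono : MonotoneOn F (Ici b) := by
    apply monotoneOn_of_hasDerivWithinAt_nonneg (convex_Ici b) hFcont
    · intro x hx
      rw [interior_Ici] at hx
      exact (hFderiv x (hb.trans hx)).hasDerivWithinAt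
    · intro x hx
      rw [interior_Ici] at hx
      exact hGnn x hx.le
  have hFb : F b = 0 := by simp only [hF_def]; ring
  have hFa : 0 ≤ F a := by rw [← hFb]; exact hFmono (self_mem_Ici) hab hab
  simp only [hF_def] at hFa
  linarith

lemma main_aux {a b p : ℝ} (hb : 0 ≤ b) (hab : b ≤ a) (hp : 1 < p) :
    (4 * p / (p + 1) ^ 2) * (a ^ ((p + 1) / 2) - b ^ ((p + 1) / 2)) ^ 2 ≤
      (a - b) * (a ^ p - b ^ p) := by
  have hp1 : (0:ℝ) < (p + 1) ^ 2 := by positivity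
  rcases hb.eq_or_lt with rfl0 | hb0
  · subst rfl0
    rw [Real.zero_rpow (by positivity : (p + 1) / 2 ≠ 0),
      Real.zero_rpow (by positivity : p ≠ 0), sub_zero, sub_zero, sub_zero]
    rcases hab.eq_or_lt with rfl0 | ha0
    · rw [← rfl0, Real.zero_rpow (by positivity : (p + 1) / 2 ≠ 0)]
      simp
    · have hsq : (a ^ ((p + 1) / 2)) ^ 2 = a * a ^ p := by
        rw [← Real.rpow_natCast (a ^ ((p + 1) / 2)) 2, ← Real.rpow_mul ha0.le]
        rw [show (p + 1) / 2 * (2:ℕ) = p + 1 by push_cast; ring]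
        rw [Real.rpow_add ha0, Real.rpow_one]; ring
      rw [hsq]
      have hnn : 0 ≤ a * a ^ p := by positivity
      have hc : 4 * p / (p + 1) ^ 2 ≤ 1 := by
        rw [div_le_one hp1]; nlinarith [sq_nonneg (p - 1)]
      nlinarith
  · have hk := key_lemma hb0 hp hab
    rw [div_mul_eq_mul_div, div_le_iff₀ hp1]
    nlinarith [hk]

theorem stmt2 (a b p : ℝ) (ha : 0 ≤ a) (hb : 0 ≤ b) (hp : 1 < p) :
    (4 * p / (p + 1) ^ 2) * (a ^ ((p + 1) / 2) - b ^ ((p + 1) / 2)) ^ 2 ≤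
      (a - b) * (a ^ p - b ^ p) := by
  rcases le_total b a with hab | hab
  · exact main_aux hb hab hp
  · have h := main_aux ha hab hp
    have e1 : (b ^ ((p + 1) / 2) - a ^ ((p + 1) / 2)) ^ 2
        = (a ^ ((p + 1) / 2) - b ^ ((p + 1) / 2)) ^ 2 := by ring
    have e2 : (b - a) * (b ^ p - a ^ p) = (a - b) * (a ^ p - b ^ p) := by ring
    rw [e1, e2] at h
    exact h
end

section
/- Let τ > 0, C > 0, β > 1, and let (a_k) be a sequence of nonnegative reals satisfying a_k - a_{k-1} ≤ -τ C a_k^β for all k ≥ 1. Then for every k ≥ 1, a_k ≤ min{a_0, (C(β-1)kτ)^{-1/(β-1)}} + (τ/√2) C a_0^β. -/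
open Real

private lemma bern_neg {α t : ℝ} (hα : 0 < α) (ht0 : 0 ≤ t) (ht1 : t < 1) :
    1 + (α + 1) * t ≤ (1 - t) ^ (-(α + 1)) := by
  have h1t : (0:ℝ) < 1 - t := by linarith
  have hs : (0:ℝ) ≤ t / (1 - t) := div_nonneg ht0 h1t.le
  have hB := one_add_mul_self_le_rpow_one_add (s := t / (1 - t)) (by linarith)
    (p := α + 1) (by linarith)
  have he : (1 : ℝ) + t / (1 - t) = (1 - t)⁻¹ := by field_simp; ring
  rw [he] at hB
  have hinv : ((1 - t)⁻¹ : ℝ) ^ (α + 1) = (1 - t) ^ (-(α + 1)) := by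
    rw [Real.inv_rpow h1t.le, Real.rpow_neg h1t.le]
  rw [hinv] at hB
  have htt : t ≤ t / (1 - t) := by
    rw [le_div_iff₀ h1t]; nlinarith
  have h2 := mul_le_mul_of_nonneg_left htt (by linarith : (0:ℝ) ≤ α + 1)
  linarith

private lemma taylor2 {α δ : ℝ} (hα : 0 < α) (h0 : 0 ≤ δ) (h1 : δ < 1) :
    1 + α * δ + α * (α + 1) * δ ^ 2 / 2 ≤ (1 - δ) ^ (-α) := by
  set g : ℝ → ℝ := fun t => (1 - t) ^ (-α) - α * t - α * (α + 1) * t ^ 2 / 2 with hg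
  have hder : ∀ t : ℝ, t < 1 →
      HasDerivAt g (α * (1 - t) ^ (-(α + 1)) - α - α * (α + 1) * t) t := by
    intro t ht
    have h1t : (0:ℝ) < 1 - t := by linarith
    have d1 : HasDerivAt (fun t : ℝ => 1 - t) (-1) t := by
      simpa using (hasDerivAt_id t).const_sub 1
    have d2 : HasDerivAt (fun t : ℝ => (1 - t) ^ (-α))
        ((-1) * (-α) * (1 - t) ^ (-α - 1)) t := d1.rpow_const (Or.inl h1t.ne')
    have d3 : HasDerivAt (fun t : ℝ => α * t) α t := by
      simpa using (hasDerivAt_id t).const_mul α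
    have d4 : HasDerivAt (fun t : ℝ => α * (α + 1) * t ^ 2 / 2) (α * (α + 1) * t) t := by
      have := ((hasDerivAt_pow 2 t).const_mul (α * (α + 1))).div_const 2
      refine this.congr_deriv ?_
      simp
      ring
    have hcomb := (d2.sub d3).sub d4
    refine hcomb.congr_deriv ?_
    rw [show -α - 1 = -(α + 1) by ring]
    ring
  have hc : ContinuousOn g (Set.Icc 0 δ) := by
    apply ContinuousOn.sub
    apply ContinuousOn.sub
    · apply ContinuousOn.rpow_const ((continuous_const.sub continuous_id).continuousOn)
      intro t ht
      left
      have h2 : (0:ℝ) < 1 - t := by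
        have := ht.2; linarith
      simpa using h2.ne'
    · exact (continuous_const.mul continuous_id).continuousOn
    · exact ((continuous_const.mul (continuous_pow 2)).div_const 2).continuousOn
  have hdiff : DifferentiableOn ℝ g (interior (Set.Icc 0 δ)) := by
    rw [interior_Icc]
    intro t ht
    exact ((hder t (by linarith [ht.2])).differentiableAt).differentiableWithinAt
  have hpos : ∀ t ∈ interior (Set.Icc 0 δ), 0 ≤ deriv g t := by
    rw [interior_Icc]
    intro t ht
    have ht1 : t < 1 := by linarith [ht.2]
    rw [(hder t ht1).deriv]
    have hb := bern_neg hα (le_of_lt ht.1) ht1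
    nlinarith [mul_le_mul_of_nonneg_left hb hα.le]
  have mono : MonotoneOn g (Set.Icc 0 δ) :=
    monotoneOn_of_deriv_nonneg (convex_Icc 0 δ) hc hdiff hpos
  have h2 := mono (Set.left_mem_Icc.mpr h0) (Set.right_mem_Icc.mpr h0) h0
  have hg0 : g 0 = 1 := by simp [hg]
  rw [hg0] at h2
  simp only [hg] at h2
  linarith

set_option maxHeartbeats 1000000 in
private lemma spade {α s x w : ℝ} (hα : 0 < α) (hs : 0 < s) (hx : 0 < x) (hxw : x ≤ w)
    (hw1 : w ≤ 1) (H : x ^ (-α) - w ^ (-α) ≤ s * α) :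
    w - x ≤ s * (x + s / Real.sqrt 2) ^ (α + 1) := by
  have hw0 : 0 < w := lt_of_lt_of_le hx hxw
  set β : ℝ := α + 1 with hβdef
  set E : ℝ := s / Real.sqrt 2 with hEs
  set d : ℝ := w - x with hd
  have hd0 : 0 ≤ d := by rw [hd]; linarith
  set δ : ℝ := d / w with hδ
  clear_value β E d δ
  have hδ0 : 0 ≤ δ := by rw [hδ]; exact div_nonneg hd0 hw0.le
  have hδ1 : δ < 1 := by
    rw [hδ, div_lt_one hw0, hd]; linarith
  have hxw' : x = w * (1 - δ) := by
    rw [hδ, hd]; field_simp; ring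
  have hrw : x ^ (-α) = w ^ (-α) * (1 - δ) ^ (-α) := by
    rw [hxw', Real.mul_rpow hw0.le (by linarith)]
  have hT := taylor2 hα hδ0 hδ1
  have hwα : 0 < w ^ (-α) := Real.rpow_pos_of_pos hw0 _
  have hs1 : w ^ (-α) * (δ * (1 + β * δ / 2)) ≤ s := by
    have h2 : w ^ (-α) * (α * δ + α * (α + 1) * δ ^ 2 / 2) ≤ s * α := by
      calc w ^ (-α) * (α * δ + α * (α + 1) * δ ^ 2 / 2)
          = w ^ (-α) * ((1 + α * δ + α * (α + 1) * δ ^ 2 / 2) - 1) := by ring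
        _ ≤ w ^ (-α) * ((1 - δ) ^ (-α) - 1) := by
            apply mul_le_mul_of_nonneg_left _ hwα.le
            linarith
        _ = x ^ (-α) - w ^ (-α) := by rw [hrw]; ring
        _ ≤ s * α := H
    have h3 : w ^ (-α) * (δ * (1 + β * δ / 2)) * α ≤ s * α := by
      calc w ^ (-α) * (δ * (1 + β * δ / 2)) * α
          = w ^ (-α) * (α * δ + α * (α + 1) * δ ^ 2 / 2) := by rw [hβdef]; ring
        _ ≤ s * α := h2
    exact le_of_mul_le_mul_right h3 hα
  have hβ0 : (0:ℝ) < β := by rw [hβdef]; linarith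
  have hwainv : (1:ℝ) ≤ w ^ (-α) :=
    Real.one_le_rpow_of_pos_of_le_one_of_nonpos hw0 hw1 (by linarith)
  have hfact : 0 ≤ δ * (1 + β * δ / 2) := by
    apply mul_nonneg hδ0
    linarith [mul_nonneg hβ0.le hδ0]
  have hs2 : δ * (1 + β * δ / 2) ≤ s := by
    calc δ * (1 + β * δ / 2) = 1 * (δ * (1 + β * δ / 2)) := by ring
      _ ≤ w ^ (-α) * (δ * (1 + β * δ / 2)) := mul_le_mul_of_nonneg_right hwainv hfact
      _ ≤ s := hs1
  have hr2 : (0:ℝ) < Real.sqrt 2 := by positivity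
  have hr2sq : Real.sqrt 2 ^ 2 = 2 := Real.sq_sqrt (by norm_num)
  have hr2lt : Real.sqrt 2 < 3 / 2 := by nlinarith [hr2sq, hr2]
  have hr2gt : 1 < Real.sqrt 2 := by nlinarith [hr2sq, hr2]
  have hE0 : 0 < E := by rw [hEs]; exact div_pos hs hr2
  have hpoww : w ^ (-α) * w ^ β = w := by
    rw [← Real.rpow_add hw0, show -α + β = (1:ℝ) by rw [hβdef]; ring, Real.rpow_one]
  have hdδw : d = δ * w := by
    rw [hδ]; field_simp
  have hwβ : 0 < w ^ β := Real.rpow_pos_of_pos hw0 _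
  show d ≤ s * (x + E) ^ β
  rcases le_or_gt d E with hcase | hcase
  · -- easy case : w ≤ x + E
    have hwxE : w ≤ x + E := by rw [hd] at hcase; linarith
    have h4 : w ^ (-α) * δ ≤ s := by
      calc w ^ (-α) * δ ≤ w ^ (-α) * (δ * (1 + β * δ / 2)) := by
            apply mul_le_mul_of_nonneg_left _ hwα.le
            linarith [mul_nonneg hδ0 (mul_nonneg hβ0.le hδ0)]
        _ ≤ s := hs1
    have h5 := mul_le_mul_of_nonneg_right h4 hwβ.le
    have e : w ^ (-α) * δ * w ^ β = δ * w := by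
      rw [show w ^ (-α) * δ * w ^ β = δ * (w ^ (-α) * w ^ β) by ring, hpoww]
    rw [e] at h5
    calc d = δ * w := hdδw
      _ ≤ s * w ^ β := h5
      _ ≤ s * (x + E) ^ β :=
          mul_le_mul_of_nonneg_left (Real.rpow_le_rpow hw0.le hwxE hβ0.le) hs.le
  · -- hard case : E < d
    have hsub : 1 + β * δ / 2 < Real.sqrt 2 := by
      by_contra hge
      push_neg at hge
      have h6 : δ ≤ E := by
        rw [hEs, le_div_iff₀ hr2]
        calc δ * Real.sqrt 2 ≤ δ * (1 + β * δ / 2) := mul_le_mul_of_nonneg_left hge hδ0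
          _ ≤ s := hs2
      have h7 : d ≤ δ := by
        calc d = δ * w := hdδw
          _ ≤ δ * 1 := mul_le_mul_of_nonneg_left hw1 hδ0
          _ = δ := by ring
      linarith
    set u : ℝ := β * δ with hu
    clear_value u
    have hu0 : 0 ≤ u := by rw [hu]; exact mul_nonneg hβ0.le hδ0
    have hu1 : u < 1 := by rw [hu]; linarith
    set θ : ℝ := (d - E) / w with hθ
    clear_value θ
    have hθpos : 0 < θ := by rw [hθ]; exact div_pos (by linarith) hw0
    have hθeq : θ = δ - E / w := by rw [hθ, hδ]; ring
    have hEw : E ≤ E / w := by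
      rw [le_div_iff₀ hw0]
      have := mul_le_mul_of_nonneg_left hw1 hE0.le
      linarith
    have hθδ : θ ≤ δ - E := by rw [hθeq]; linarith
    have hθδ' : θ < δ := by linarith
    have hθ1 : θ < 1 := by linarith
    have hElb : δ * (1 + u / 2) / Real.sqrt 2 ≤ E := by
      rw [hEs]
      exact div_le_div_of_nonneg_right hs2 hr2.le
    have hθmax : β * θ ≤ u * (1 - (1 + u / 2) / Real.sqrt 2) := by
      have h8 : θ ≤ δ - δ * (1 + u / 2) / Real.sqrt 2 := by linarith
      calc β * θ ≤ β * (δ - δ * (1 + u / 2) / Real.sqrt 2) :=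
            mul_le_mul_of_nonneg_left h8 hβ0.le
        _ = u * (1 - (1 + u / 2) / Real.sqrt 2) := by rw [hu]; ring
    have hfrac0 : 0 ≤ (1 + u / 2) / Real.sqrt 2 := by positivity
    have hβθ1 : β * θ < 1 := by
      linarith [hθmax, mul_nonneg hu0 hfrac0, hu1]
    have hbern : 1 - β * θ ≤ (1 - θ) ^ β := by
      have hB := one_add_mul_self_le_rpow_one_add (s := -θ) (by linarith)
        (p := β) (by rw [hβdef]; linarith)
      calc 1 - β * θ = 1 + β * (-θ) := by ring
        _ ≤ (1 + -θ) ^ β := hB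
        _ = (1 - θ) ^ β := by ring_nf
    have hscalar : 1 ≤ (1 + u / 2) * (1 - β * θ) := by
      have key : 1 ≤ (1 + u / 2) * (1 - u * (1 - (1 + u / 2) / Real.sqrt 2)) := by
        have expand : (1 + u / 2) * (1 - u * (1 - (1 + u / 2) / Real.sqrt 2))
            = ((1 + u / 2) * (Real.sqrt 2 - u * Real.sqrt 2 + u * (1 + u / 2))) / Real.sqrt 2 := by
          field_simp
          ring
        rw [expand, le_div_iff₀ hr2]
        have hc1 : (0:ℝ) ≤ 3 / 2 - Real.sqrt 2 := by linarith
        linarith [mul_nonneg hu0 hc1, mul_nonneg (mul_nonneg hu0 hu0) hc1,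
          mul_nonneg (mul_nonneg hu0 hu0) hu0, mul_nonneg hu0 hu0, hu0]
      calc 1 ≤ (1 + u / 2) * (1 - u * (1 - (1 + u / 2) / Real.sqrt 2)) := key
        _ ≤ (1 + u / 2) * (1 - β * θ) := by
            apply mul_le_mul_of_nonneg_left _ (by linarith)
            linarith
    have hxE : x + E = w * (1 - θ) := by
      rw [hθ, hd]
      field_simp
      ring
    have h1θ : 0 < 1 - θ := by linarith
    have hrw2 : (x + E) ^ β = w ^ β * (1 - θ) ^ β := by
      rw [hxE, Real.mul_rpow hw0.le h1θ.le]
    have hswβ : δ * w * (1 + u / 2) ≤ s * w ^ β := by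
      have h9 := mul_le_mul_of_nonneg_right hs1 hwβ.le
      have e : w ^ (-α) * (δ * (1 + u / 2)) * w ^ β = δ * w * (1 + u / 2) := by
        rw [show w ^ (-α) * (δ * (1 + u / 2)) * w ^ β
            = (w ^ (-α) * w ^ β) * (δ * (1 + u / 2)) by ring, hpoww]
        ring
      rw [e] at h9
      exact h9
    have hβθ0 : 0 ≤ 1 - β * θ := by linarith
    calc d = δ * w := hdδw
      _ ≤ δ * w * ((1 + u / 2) * (1 - β * θ)) :=
          le_mul_of_one_le_right (mul_nonneg hδ0 hw0.le) hscalar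
      _ = (δ * w * (1 + u / 2)) * (1 - β * θ) := by ring
      _ ≤ (s * w ^ β) * (1 - β * θ) := mul_le_mul_of_nonneg_right hswβ hβθ0
      _ ≤ s * w ^ β * (1 - θ) ^ β := by
          apply mul_le_mul_of_nonneg_left hbern (by positivity)
      _ = s * (x + E) ^ β := by rw [hrw2]; ring

set_option maxHeartbeats 1000000 in
theorem stmt5 (τ C β : ℝ) (hτ : 0 < τ) (hC : 0 < C) (hβ : 1 < β)
    (a : ℕ → ℝ) (ha : ∀ k, 0 ≤ a k)
    (hrec : ∀ k : ℕ, 1 ≤ k → a k - a (k - 1) ≤ -τ * C * a k ^ β) :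
    ∀ k : ℕ, 1 ≤ k →
      a k ≤ min (a 0) ((C * (β - 1) * ((k : ℝ) * τ)) ^ (-(1 / (β - 1)))) +
              (τ / Real.sqrt 2) * C * a 0 ^ β := by
  have hα : 0 < β - 1 := by linarith
  obtain ⟨X, hXdef⟩ : ∃ X : ℕ → ℝ,
      ∀ j : ℕ, X j = (C * (β - 1) * ((j : ℝ) * τ)) ^ (-(1 / (β - 1))) := ⟨_, fun _ => rfl⟩
  obtain ⟨E, hEdef⟩ : ∃ E : ℝ, E = τ / Real.sqrt 2 * C * a 0 ^ β := ⟨_, rfl⟩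
  have hE0 : 0 ≤ E := by
    rw [hEdef]
    exact mul_nonneg (mul_nonneg (div_nonneg hτ.le (Real.sqrt_nonneg 2)) hC.le)
      (Real.rpow_nonneg (ha 0) β)
  have hdec : ∀ j : ℕ, 1 ≤ j → a j ≤ a (j - 1) := by
    intro j hj
    have h := hrec j hj
    have h2 : 0 ≤ τ * C * a j ^ β :=
      mul_nonneg (mul_nonneg hτ.le hC.le) (Real.rpow_nonneg (ha j) β)
    linarith
  have hle0 : ∀ j : ℕ, a j ≤ a 0 := by
    intro j
    induction j with
    | zero => exact le_refl _
    | succ n ih =>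
      have h := hdec (n + 1) (Nat.le_add_left 1 n)
      simpa using h.trans ih
  have hbase : ∀ j : ℕ, 1 ≤ j → 0 < C * (β - 1) * ((j : ℝ) * τ) := by
    intro j hj
    have hjp : (0:ℝ) < (j : ℝ) := by exact_mod_cast hj
    exact mul_pos (mul_pos hC hα) (mul_pos hjp hτ)
  have hXpos : ∀ j : ℕ, 1 ≤ j → 0 < X j := by
    intro j hj
    rw [hXdef]
    exact Real.rpow_pos_of_pos (hbase j hj) _
  have hne : β - 1 ≠ 0 := ne_of_gt hα
  have hXinv : ∀ j : ℕ, 1 ≤ j → X j ^ (-(β - 1)) = C * (β - 1) * ((j : ℝ) * τ) := by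
    intro j hj
    rw [hXdef, ← Real.rpow_mul (hbase j hj).le,
      show -(1 / (β - 1)) * -(β - 1) = (1:ℝ) by field_simp, Real.rpow_one]
  have hexp : -(1 / (β - 1)) ≤ (0:ℝ) := by
    have : 0 < 1 / (β - 1) := div_pos one_pos hα
    linarith
  have hXanti : ∀ j : ℕ, 1 ≤ j → X (j + 1) ≤ X j := by
    intro j hj
    rw [hXdef, hXdef]
    apply Real.rpow_le_rpow_of_nonpos (hbase j hj) _ hexp
    push_cast
    linarith [mul_nonneg (mul_nonneg hC.le hα.le) hτ.le]
  rcases (ha 0).lt_or_eq with hA0 | hA0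
  · -- 0 < a 0
    have helper : ∀ j : ℕ, 1 ≤ j → ∀ W : ℝ, 0 < W → W ≤ a 0 →
        min (a 0) (X j) ≤ W →
        C * (β - 1) * (((j : ℝ) - 1) * τ) ≤ W ^ (-(β - 1)) →
        a (j - 1) ≤ W + E →
        a j ≤ min (a 0) (X j) + E := by
      intro j hj W hW0 hWA hminW hHW hprev
      rcases le_or_gt (a 0) (X j) with hmin | hmin
      · rw [min_eq_left hmin]
        linarith [hle0 j]
      · have hXW : X j ≤ W := by
          rw [min_eq_right hmin.le] at hminW; exact hminW
        rw [min_eq_right hmin.le]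
        by_contra hcon
        push_neg at hcon
        have hXj : 0 < X j := hXpos j hj
        set s : ℝ := τ * C * a 0 ^ (β - 1) with hsdef
        have hs0 : 0 < s := mul_pos (mul_pos hτ hC) (Real.rpow_pos_of_pos hA0 _)
        have hAα : 0 < a 0 ^ (-(β - 1)) := Real.rpow_pos_of_pos hA0 _
        have hAne : a 0 ^ (β - 1) ≠ 0 := (Real.rpow_pos_of_pos hA0 _).ne'
        have hsA : s * a 0 ^ (-(β - 1)) = τ * C := by
          rw [hsdef, Real.rpow_neg hA0.le]
          field_simp
        have hH : (X j / a 0) ^ (-(β - 1)) - (W / a 0) ^ (-(β - 1)) ≤ s * (β - 1) := by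
          rw [Real.div_rpow hXj.le hA0.le, Real.div_rpow hW0.le hA0.le,
            div_sub_div_same, div_le_iff₀ hAα,
            show s * (β - 1) * a 0 ^ (-(β - 1)) = s * a 0 ^ (-(β - 1)) * (β - 1) by ring,
            hsA, hXinv j hj]
          have hid : C * (β - 1) * ((j : ℝ) * τ)
              = C * (β - 1) * (((j : ℝ) - 1) * τ) + τ * C * (β - 1) := by ring
          linarith
        have hdivW : W / a 0 ≤ 1 := by rw [div_le_one hA0]; exact hWA
        have hdivXW : X j / a 0 ≤ W / a 0 := by
          exact div_le_div_of_nonneg_right hXW hA0.le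
        have hsp := spade (α := β - 1) (s := s) (x := X j / a 0) (w := W / a 0) hα hs0
          (div_pos hXj hA0) hdivXW hdivW hH
        rw [show β - 1 + 1 = β by ring] at hsp
        -- unscale
        have hApow : a 0 * a 0 ^ (β - 1) = a 0 ^ β := by
          have h := Real.rpow_add hA0 1 (β - 1)
          rw [Real.rpow_one, show (1:ℝ) + (β - 1) = β by ring] at h
          exact h.symm
        have hEeq : a 0 * s / Real.sqrt 2 = E := by
          rw [hsdef, hEdef, ← hApow]
          ring
        have hXE0 : 0 ≤ X j + E := by linarith [hXj.le, hE0]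
        have harg : X j / a 0 + s / Real.sqrt 2 = (X j + E) / a 0 := by
          rw [← hEeq]
          field_simp
        have hsp2 : W - X j ≤ a 0 * (s * ((X j + E) / a 0) ^ β) := by
          have h10 := mul_le_mul_of_nonneg_left hsp hA0.le
          calc W - X j = a 0 * (W / a 0 - X j / a 0) := by field_simp
            _ ≤ a 0 * (s * (X j / a 0 + s / Real.sqrt 2) ^ β) := h10
            _ = a 0 * (s * ((X j + E) / a 0) ^ β) := by rw [harg]
        rw [Real.div_rpow hXE0 hA0.le] at hsp2
        have hAβ : (0:ℝ) < a 0 ^ β := Real.rpow_pos_of_pos hA0 β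
        have hfin : a 0 * (s * ((X j + E) ^ β / a 0 ^ β)) = τ * C * (X j + E) ^ β := by
          rw [hsdef]
          field_simp
          rw [← hApow]
        rw [hfin] at hsp2
        -- contradiction
        have hrecj := hrec j hj
        have hmono : (X j + E) ^ β < (a j) ^ β :=
          Real.rpow_lt_rpow hXE0 hcon (by linarith)
        have hstrict : τ * C * (X j + E) ^ β < τ * C * (a j) ^ β :=
          mul_lt_mul_of_pos_left hmono (mul_pos hτ hC)
        have hchain : a (j - 1) < a (j - 1) := by
          calc a (j - 1) ≤ W + E := hprev
            _ ≤ X j + E + τ * C * (X j + E) ^ β := by linarith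
            _ < a j + τ * C * (a j) ^ β := by linarith
            _ ≤ a (j - 1) := by linarith [hrecj]
        exact absurd hchain (lt_irrefl _)
    -- induction
    intro k hk
    rw [← hXdef k, ← hEdef]
    induction k, hk using Nat.le_induction with
    | base =>
      apply helper 1 le_rfl (a 0) hA0 le_rfl (min_le_left _ _) ?_ ?_
      · have h11 : ((1:ℕ) : ℝ) - 1 = 0 := by norm_num
        rw [h11]
        simpa using Real.rpow_nonneg hA0.le (-(β - 1))
      · have h14 : a 0 ≤ a 0 + E := by linarith
        simpa using h14
    | succ j hj ih =>
      apply helper (j + 1) (by omega) (min (a 0) (X j)) (lt_min hA0 (hXpos j hj))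
        (min_le_left _ _) (min_le_min le_rfl (hXanti j hj)) ?_ ?_
      · have h12 : (((j + 1 : ℕ)) : ℝ) - 1 = (j : ℝ) := by push_cast; ring
        rw [h12]
        have h13 : (min (a 0) (X j)) ^ (-(β - 1)) ≥ (X j) ^ (-(β - 1)) := by
          apply Real.rpow_le_rpow_of_nonpos (lt_min hA0 (hXpos j hj))
            (min_le_right _ _) (by linarith)
        rw [hXinv j hj] at h13
        exact h13
      · simpa using ih
  · -- a 0 = 0
    intro k hk
    have hak : a k = 0 := le_antisymm (hA0 ▸ hle0 k) (ha k)
    rw [hak, ← hXdef k, ← hEdef]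
    have hXk0 : 0 ≤ X k := by
      rw [hXdef]
      exact Real.rpow_nonneg (by positivity) _
    exact add_nonneg (le_min (ha 0) hXk0) hE0
end
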